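/- Let p be a prime, H₀ a finite cyclic group, and χ, ψ : H₀ → F_p^× two characters with ord(ψ) < ord(χ) (order meaning the cardinality of the image). Let i ≥ 1 and let H_i := H₀ ⋉ F_p^i be the semidirect product with multiplication (a,v)·(b,w) = (ab, v + χ(a)w), and let λ_i : H₀ → H_i, a ↦ (a,0). Then the normal subgroup of H_i generated by λ_i(ker ψ) equals π_i⁻¹(ker ψ) = ker(ψ) ⋉ F_p^i, where π_i : H_i → H₀ is the projection. -/

import Mathlib

noncomputable section

/-- The homomorphism `AddAut A →* MulAut (Multiplicative A)`. -/
def addAutToMulAutMultiplicative (A : Type*) [AddGroup A] :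
    Multiplicative (AddAut A) →* MulAut (Multiplicative A) where
  toFun e := AddEquiv.toMultiplicative (Multiplicative.toAdd e)
  map_one' := rfl
  map_mul' _ _ := rfl

/-- The diagonal action of `H₀` on `(ℤ/pℤ)^i` in which `a ∈ H₀` acts on each component by
multiplication with `χ(a)`, for a character `χ : H₀ → F_p^×`. -/
def chiAction (p i : ℕ) (H₀ : Type*) [Group H₀] (χ : H₀ →* (ZMod p)ˣ) :
    H₀ →* MulAut (Multiplicative (Fin i → ZMod p)) :=
  (addAutToMulAutMultiplicative (Fin i → ZMod p)).comp
    ((DistribMulAction.toAddAut ((ZMod p)ˣ) (Fin i → ZMod p)).comp χ)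

lemma chiAction_apply (p i : ℕ) (H₀ : Type*) [Group H₀] (χ : H₀ →* (ZMod p)ˣ)
    (a : H₀) (w : Fin i → ZMod p) :
    chiAction p i H₀ χ a (Multiplicative.ofAdd w) =
      Multiplicative.ofAdd ((χ a : ZMod p) • w) := rfl

/-- Lemma `lm:normteileristgross`. Let `p` be a prime, `H₀` a finite
cyclic group, `χ ψ : H₀ → F_p^×` characters with `ord(ψ) < ord(χ)` (order = cardinality of
the image).  Let `H_i := H₀ ⋉ F_p^i` (the semidirect product for the diagonal `χ`-action,
with multiplication `(a,v)(b,w) = (ab, v + χ(a)w)`) and `λ_i : H₀ → H_i` the canonical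
section.  Then the normal subgroup of `H_i` generated by `λ_i(ker ψ)` is all of
`π_i⁻¹(ker ψ) = ker ψ ⋉ F_p^i`, where `π_i : H_i → H₀` is the projection. -/
theorem normalClosure_section_ker_eq_comap
    (p : ℕ) (hp : p.Prime) (H₀ : Type*) [Group H₀] [Finite H₀] (hcyc : IsCyclic H₀)
    (χ ψ : H₀ →* (ZMod p)ˣ)
    (hord : Nat.card ψ.range < Nat.card χ.range)
    (i : ℕ) (hi : 1 ≤ i) :
    Subgroup.normalClosure
        ((SemidirectProduct.inr (φ := chiAction p i H₀ χ)) '' (ψ.ker : Set H₀)) =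
      Subgroup.comap
        (SemidirectProduct.rightHom :
          (Multiplicative (Fin i → ZMod p)) ⋊[chiAction p i H₀ χ] H₀ →* H₀) ψ.ker := by
  haveI := Fact.mk hp
  -- cardinality fact
  have hcard : ∀ f : H₀ →* (ZMod p)ˣ, Nat.card f.range * Nat.card f.ker = Nat.card H₀ := by
    intro f
    rw [Subgroup.card_eq_card_quotient_mul_card_subgroup f.ker,
      Nat.card_congr (QuotientGroup.quotientKerEquivRange f).toEquiv]
  -- there is `a₀ ∈ ker ψ` with `χ a₀ ≠ 1`
  obtain ⟨a₀, ha₀ψ, ha₀χ⟩ : ∃ a₀, a₀ ∈ ψ.ker ∧ χ a₀ ≠ 1 := by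
    by_contra h
    push_neg at h
    have hle : ψ.ker ≤ χ.ker := fun a ha => h a ha
    have h1 : Nat.card ψ.ker ≤ Nat.card χ.ker := Subgroup.card_le_of_le hle
    have h2 : Nat.card H₀ < Nat.card H₀ := by
      calc Nat.card H₀ = Nat.card ψ.range * Nat.card ψ.ker := (hcard ψ).symm
        _ < Nat.card χ.range * Nat.card χ.ker := by
            exact Nat.mul_lt_mul_of_lt_of_le hord h1 Nat.card_pos
        _ = Nat.card H₀ := hcard χ
    exact lt_irrefl _ h2
  set φ := chiAction p i H₀ χ
  set K := Subgroup.comap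
        (SemidirectProduct.rightHom :
          (Multiplicative (Fin i → ZMod p)) ⋊[φ] H₀ →* H₀) ψ.ker with hK
  haveI : K.Normal := Subgroup.Normal.comap inferInstance _
  apply le_antisymm
  · apply Subgroup.normalClosure_le_normal
    rintro x ⟨a, ha, rfl⟩
    simpa [hK, Subgroup.mem_comap] using ha
  · rintro ⟨n, g⟩ hx
    have hg : g ∈ ψ.ker := hx
    set nc := Subgroup.normalClosure
        ((SemidirectProduct.inr (φ := φ)) '' (ψ.ker : Set H₀)) with hnc
    have hinrg : ∀ a ∈ ψ.ker, (SemidirectProduct.inr a : _ ⋊[φ] H₀) ∈ nc := fun a ha =>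
      Subgroup.subset_normalClosure ⟨a, ha, rfl⟩
    have hinl : ∀ v : Fin i → ZMod p,
        (SemidirectProduct.inl (Multiplicative.ofAdd v) : _ ⋊[φ] H₀) ∈ nc := by
      intro v
      have hc : ((1 : ZMod p) - (χ a₀ : ZMod p)) ≠ 0 := by
        intro h
        apply ha₀χ
        have : ((χ a₀ : ZMod p)) = 1 := by linear_combination -h
        exact Units.ext this
      set w : Fin i → ZMod p := ((1 : ZMod p) - (χ a₀ : ZMod p))⁻¹ • v with hw
      have hmem : (SemidirectProduct.inl (Multiplicative.ofAdd w) : _ ⋊[φ] H₀) *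
          SemidirectProduct.inr a₀ *
          (SemidirectProduct.inl (Multiplicative.ofAdd w))⁻¹ *
          (SemidirectProduct.inr a₀)⁻¹ ∈ nc :=
        Subgroup.mul_mem _
          (Subgroup.Normal.conj_mem Subgroup.normalClosure_normal _
            (hinrg a₀ ha₀ψ) (SemidirectProduct.inl (Multiplicative.ofAdd w)))
          (Subgroup.inv_mem _ (hinrg a₀ ha₀ψ))
      have heq : (SemidirectProduct.inl (Multiplicative.ofAdd w) : _ ⋊[φ] H₀) *
          SemidirectProduct.inr a₀ *
          (SemidirectProduct.inl (Multiplicative.ofAdd w))⁻¹ *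
          (SemidirectProduct.inr a₀)⁻¹ =
          SemidirectProduct.inl (Multiplicative.ofAdd v) := by
        have hval : w + (χ a₀ : ZMod p) • (-w) = v := by
          have h1 : w + (χ a₀ : ZMod p) • (-w) = ((1 : ZMod p) - (χ a₀ : ZMod p)) • w := by
            module
          rw [h1, hw, smul_smul, mul_inv_cancel₀ hc, one_smul]
        calc (SemidirectProduct.inl (Multiplicative.ofAdd w) : _ ⋊[φ] H₀) *
              SemidirectProduct.inr a₀ *
              (SemidirectProduct.inl (Multiplicative.ofAdd w))⁻¹ *
              (SemidirectProduct.inr a₀)⁻¹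
            = SemidirectProduct.inl (Multiplicative.ofAdd w) *
              (SemidirectProduct.inr a₀ *
                SemidirectProduct.inl (Multiplicative.ofAdd w)⁻¹ *
                SemidirectProduct.inr a₀⁻¹) := by
              rw [map_inv, map_inv]; group
          _ = SemidirectProduct.inl (Multiplicative.ofAdd w) *
              SemidirectProduct.inl (φ a₀ (Multiplicative.ofAdd w)⁻¹) := by
              rw [SemidirectProduct.inl_aut]
          _ = SemidirectProduct.inl (Multiplicative.ofAdd v) := by
              rw [← map_mul]
              exact congrArg SemidirectProduct.inl (congrArg Multiplicative.ofAdd hval)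
      rw [← heq]
      exact hmem
    have : (⟨n, g⟩ : _ ⋊[φ] H₀) =
        SemidirectProduct.inl n * SemidirectProduct.inr g :=
      (SemidirectProduct.inl_left_mul_inr_right _).symm
    rw [this]
    exact Subgroup.mul_mem _ (by simpa using hinl n.toAdd) (hinrg g hg)

end
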